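/- If all entries of X lie in the interval [m, M] and all entries of Y lie in [m, M], with X of length l1 ≤ l2 = length of Y, then diss(X, Y) ≤ (M − m) · √(l2) / (2 l2) = (M − m)/(2√(l2)). In particular diss(X,Y) ≤ (M − m)/2. -/

import Mathlib

/-- ℕ-indexed extension of `X : Fin l1 → ℝ`: `l2` copies of the first value,
then `X`, then copies of the last value (clamped indexing). -/
noncomputable def extN (l1 l2 : ℕ) (h : 1 ≤ l1) (X : Fin l1 → ℝ) : ℕ → ℝ :=
  fun i => X ⟨min (i - l2) (l1 - 1), by omega⟩

/-- Euclidean norm on ℝ^n. -/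
noncomputable def enorm {n : ℕ} (v : Fin n → ℝ) : ℝ :=
  Real.sqrt (∑ j, v j ^ 2)

/-- Dissimilarity between curves of lengths `l1 ≤ l2`: minimum over the
sliding windows `q ∈ {0, …, l1+l2-2}` (0-based) of the normalized Euclidean
distance between the length-`l2` window of the extension of `X` and `Y`. -/
noncomputable def diss (l1 l2 : ℕ) (h1 : 1 ≤ l1) (h2 : 1 ≤ l2)
    (X : Fin l1 → ℝ) (Y : Fin l2 → ℝ) : ℝ :=
  (Finset.range (l1 + l2 - 1)).inf'
    (Finset.nonempty_range_iff.mpr (by omega))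
    fun q => _root_.enorm (fun j : Fin l2 => extN l1 l2 h1 X (q + j) - Y j) / (2 * l2)

theorem diss_le_of_bounded (l1 l2 : ℕ) (h1 : 1 ≤ l1) (h2 : 1 ≤ l2)
    (hle : l1 ≤ l2) (m M : ℝ) (X : Fin l1 → ℝ) (Y : Fin l2 → ℝ)
    (hX : ∀ i, m ≤ X i ∧ X i ≤ M) (hY : ∀ j, m ≤ Y j ∧ Y j ≤ M) :
    diss l1 l2 h1 h2 X Y ≤ (M - m) * Real.sqrt l2 / (2 * l2) ∧
    diss l1 l2 h1 h2 X Y ≤ (M - m) / 2 := by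

  have hmM : m ≤ M := le_trans (hX ⟨0, by omega⟩).1 (hX ⟨0, by omega⟩).2
  have key : diss l1 l2 h1 h2 X Y ≤ (M - m) * Real.sqrt l2 / (2 * l2) := by
    have h0 : (0 : ℕ) ∈ Finset.range (l1 + l2 - 1) := by
      simp [Finset.mem_range]; omega
    refine le_trans (Finset.inf'_le _ h0) ?_
    have hbound : _root_.enorm (fun j : Fin l2 => extN l1 l2 h1 X (0 + j) - Y j)
        ≤ (M - m) * Real.sqrt l2 := by
      unfold _root_.enorm
      have hsum : (∑ j : Fin l2, (extN l1 l2 h1 X (0 + j) - Y j) ^ 2)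
          ≤ ∑ _j : Fin l2, (M - m) ^ 2 := by
        refine Finset.sum_le_sum fun j _ => ?_
        have hx := hX ⟨min ((0 + (j : ℕ)) - l2) (l1 - 1), by omega⟩
        have hy := hY j
        have : |extN l1 l2 h1 X (0 + j) - Y j| ≤ M - m := by
          unfold extN
          rw [abs_le]
          constructor <;> nlinarith [hx.1, hx.2, hy.1, hy.2]
        calc (extN l1 l2 h1 X (0 + j) - Y j) ^ 2
            = |extN l1 l2 h1 X (0 + j) - Y j| ^ 2 := (sq_abs _).symm
          _ ≤ (M - m) ^ 2 := by
              exact pow_le_pow_left₀ (abs_nonneg _) this 2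
      calc Real.sqrt (∑ j : Fin l2, (extN l1 l2 h1 X (0 + j) - Y j) ^ 2)
          ≤ Real.sqrt (∑ _j : Fin l2, (M - m) ^ 2) := Real.sqrt_le_sqrt hsum
        _ = (M - m) * Real.sqrt l2 := by
            rw [Finset.sum_const, Finset.card_univ, Fintype.card_fin, nsmul_eq_mul,
              Real.sqrt_mul (by positivity), Real.sqrt_sq (by linarith)]
            ring
    have hpos : (0:ℝ) < 2 * l2 := by positivity
    gcongr
  refine ⟨key, key.trans ?_⟩
  have hl2 : (1:ℝ) ≤ l2 := by exact_mod_cast h2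
  have hsq : Real.sqrt l2 ≤ l2 := by
    nlinarith [Real.sq_sqrt (by linarith : (0:ℝ) ≤ l2), Real.sqrt_nonneg (l2:ℝ),
      Real.sqrt_le_sqrt (by nlinarith : (l2:ℝ) ≤ l2^2), Real.sqrt_sq (by linarith : (0:ℝ) ≤ l2)]
  rw [div_le_div_iff₀ (by positivity) (by norm_num)]
  nlinarith [Real.sqrt_nonneg (l2:ℝ)]
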